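/- Let $U_1, U_2 \subseteq \mathbb{R}^p$ be linear subspaces and let $c_F = c_F(U_1,U_2)$ be the cosine of the Friedrichs angle between them. For the Douglas–Rachford iteration with relaxation parameter $\theta = 1$ started at any $v^0 \in \mathbb{R}^p$, the governing sequence converges linearly with rate $c_F$ to its limit $v^* = P_{U_1 \cap U_2}(v^0) + P_{U_1^\perp \cap U_2^\perp}(v^0)$: for every $k \geq 0$, $\|v^k - v^*\| \leq c_F^{\,k} \, \|v^0 - v^*\|$. -/

import Mathlib

open Filter Topology RealInnerProductSpace

noncomputable def proj {p : ℕ} (U : Submodule ℝ (EuclideanSpace ℝ (Fin p)))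
    (v : EuclideanSpace ℝ (Fin p)) : EuclideanSpace ℝ (Fin p) :=
  (U.orthogonalProjectionOnto v : EuclideanSpace ℝ (Fin p))

/-- The cosine of the Friedrichs angle between two subspaces. -/
noncomputable def cosFriedrichs {p : ℕ}
    (U₁ U₂ : Submodule ℝ (EuclideanSpace ℝ (Fin p))) : ℝ :=
  sSup {r : ℝ | ∃ u₁ u₂ : EuclideanSpace ℝ (Fin p),
    ‖u₁‖ ≤ 1 ∧ ‖u₂‖ ≤ 1 ∧ u₁ ∈ U₁ ⊓ (U₁ ⊓ U₂)ᗮ ∧ u₂ ∈ U₂ ⊓ (U₁ ⊓ U₂)ᗮ ∧ r = ⟪u₁, u₂⟫}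

open Metric
def fset (U₁ U₂ : Submodule ℝ (EuclideanSpace ℝ (Fin p))) : Set ℝ :=
  {r : ℝ | ∃ u₁ u₂ : EuclideanSpace ℝ (Fin p),
    ‖u₁‖ ≤ 1 ∧ ‖u₂‖ ≤ 1 ∧ u₁ ∈ U₁ ⊓ (U₁ ⊓ U₂)ᗮ ∧ u₂ ∈ U₂ ⊓ (U₁ ⊓ U₂)ᗮ ∧ r = ⟪u₁, u₂⟫}

lemma zero_mem_fset (U₁ U₂ : Submodule ℝ (EuclideanSpace ℝ (Fin p))) :
    (0:ℝ) ∈ fset U₁ U₂ :=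
  ⟨0, 0, by simp, by simp, Submodule.zero_mem _, Submodule.zero_mem _, by simp⟩

lemma isCompact_fset (U₁ U₂ : Submodule ℝ (EuclideanSpace ℝ (Fin p))) :
    IsCompact (fset U₁ U₂) := by
  have himg : fset U₁ U₂ = (fun q : (EuclideanSpace ℝ (Fin p)) × (EuclideanSpace ℝ (Fin p)) =>
      ⟪q.1, q.2⟫) '' ((closedBall 0 1 ∩ (U₁ ⊓ (U₁ ⊓ U₂)ᗮ : Submodule ℝ _)) ×ˢ
        (closedBall 0 1 ∩ (U₂ ⊓ (U₁ ⊓ U₂)ᗮ : Submodule ℝ _))) := by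
    ext r
    constructor
    · rintro ⟨u₁, u₂, h1, h2, h3, h4, rfl⟩
      exact ⟨(u₁, u₂), ⟨⟨by simpa using h1, h3⟩, ⟨by simpa using h2, h4⟩⟩, rfl⟩
    · rintro ⟨⟨u₁, u₂⟩, ⟨⟨h1, h3⟩, ⟨h2, h4⟩⟩, rfl⟩
      exact ⟨u₁, u₂, by simpa using h1, by simpa using h2, h3, h4, rfl⟩
  rw [himg]
  apply IsCompact.image
  · exact ((isCompact_closedBall _ _).inter_right
        (Submodule.closed_of_finiteDimensional _)).prod
      ((isCompact_closedBall _ _).inter_right (Submodule.closed_of_finiteDimensional _))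
  · exact continuous_inner

noncomputable def cosF {p : ℕ}
    (U₁ U₂ : Submodule ℝ (EuclideanSpace ℝ (Fin p))) : ℝ := sSup (fset U₁ U₂)

variable (U₁ U₂ : Submodule ℝ (EuclideanSpace ℝ (Fin p)))

lemma bddAbove_fset : BddAbove (fset U₁ U₂) := (isCompact_fset U₁ U₂).bddAbove

lemma cosF_nonneg : 0 ≤ cosF U₁ U₂ :=
  le_csSup (bddAbove_fset U₁ U₂) (zero_mem_fset U₁ U₂)

lemma inner_le_cosF {u₁ u₂ : EuclideanSpace ℝ (Fin p)} (h1 : ‖u₁‖ ≤ 1) (h2 : ‖u₂‖ ≤ 1)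
    (h3 : u₁ ∈ U₁ ⊓ (U₁ ⊓ U₂)ᗮ) (h4 : u₂ ∈ U₂ ⊓ (U₁ ⊓ U₂)ᗮ) :
    ⟪u₁, u₂⟫ ≤ cosF U₁ U₂ :=
  le_csSup (bddAbove_fset U₁ U₂) ⟨u₁, u₂, h1, h2, h3, h4, rfl⟩

lemma exists_max_cosF : ∃ u₁ u₂ : EuclideanSpace ℝ (Fin p),
    ‖u₁‖ ≤ 1 ∧ ‖u₂‖ ≤ 1 ∧ u₁ ∈ U₁ ⊓ (U₁ ⊓ U₂)ᗮ ∧ u₂ ∈ U₂ ⊓ (U₁ ⊓ U₂)ᗮ ∧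
      cosF U₁ U₂ = ⟪u₁, u₂⟫ :=
  (isCompact_fset U₁ U₂).sSup_mem ⟨0, zero_mem_fset U₁ U₂⟩

lemma cosF_lt_one : cosF U₁ U₂ < 1 := by
  obtain ⟨u₁, u₂, h1, h2, h3, h4, heq⟩ := exists_max_cosF U₁ U₂
  rcases lt_or_ge (cosF U₁ U₂) 1 with h | h
  · exact h
  exfalso
  have hip : (1:ℝ) ≤ ⟪u₁, u₂⟫ := heq ▸ h
  have hcs : ⟪u₁, u₂⟫ ≤ ‖u₁‖ * ‖u₂‖ := real_inner_le_norm u₁ u₂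
  have hn1 : ‖u₁‖ = 1 := by nlinarith [norm_nonneg u₁, norm_nonneg u₂]
  have hn2 : ‖u₂‖ = 1 := by nlinarith [norm_nonneg u₁, norm_nonneg u₂]
  have hip1 : ⟪u₁, u₂⟫ ≤ 1 := by nlinarith
  have hsub : ‖u₁ - u₂‖ ^ 2 = 0 := by
    rw [norm_sub_sq_real]; nlinarith
  have huv : u₁ = u₂ := by
    have := pow_eq_zero_iff (n := 2) (by norm_num) |>.1 hsub
    rwa [norm_eq_zero, sub_eq_zero] at this
  have hmem : u₁ ∈ U₁ ⊓ U₂ := ⟨h3.1, huv ▸ h4.1⟩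
  have : u₁ = 0 := by
    have h0 : ⟪u₁, u₁⟫ = 0 := h3.2 u₁ hmem
    exact inner_self_eq_zero.1 h0
  rw [this] at hn1; simp at hn1


variable {p : ℕ} {U U₁ U₂ : Submodule ℝ (EuclideanSpace ℝ (Fin p))}
  {u v a b : EuclideanSpace ℝ (Fin p)}

lemma proj_mem : proj U v ∈ U := (U.orthogonalProjectionOnto v).2
lemma proj_add (U : Submodule ℝ (EuclideanSpace ℝ (Fin p))) (u v) :
    proj U (u + v) = proj U u + proj U v := by simp [proj]
lemma proj_sub (U : Submodule ℝ (EuclideanSpace ℝ (Fin p))) (u v) :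
    proj U (u - v) = proj U u - proj U v := by simp [proj]
lemma proj_smul (U : Submodule ℝ (EuclideanSpace ℝ (Fin p))) (c : ℝ) (v) :
    proj U (c • v) = c • proj U v := by simp [proj]
lemma proj_eq_self (h : v ∈ U) : proj U v = v := Submodule.starProjection_eq_self_iff.2 h
lemma proj_eq_zero (h : v ∈ Uᗮ) : proj U v = 0 := by
  simp [proj, Submodule.orthogonalProjectionOnto_eq_zero_iff.2 h]
lemma proj_orthogonal (U : Submodule ℝ (EuclideanSpace ℝ (Fin p))) (v) :
    proj Uᗮ v = v - proj U v := Submodule.starProjection_orthogonal_val v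
lemma inner_proj_left (U : Submodule ℝ (EuclideanSpace ℝ (Fin p))) (u v) :
    ⟪proj U u, v⟫ = ⟪u, proj U v⟫ := Submodule.inner_starProjection_left_eq_right U u v
lemma inner_proj_self (U : Submodule ℝ (EuclideanSpace ℝ (Fin p))) (v) :
    ⟪v, proj U v⟫ = ‖proj U v‖ ^ 2 := by
  have := inner_proj_left U v (proj U v)
  rw [proj_eq_self (proj_mem)] at this
  rw [← this, real_inner_self_eq_norm_sq]

lemma normproj_le {U₁ U₂ : Submodule ℝ (EuclideanSpace ℝ (Fin p))}
    {a : EuclideanSpace ℝ (Fin p)} (ha : a ∈ U₁) (ha' : a ∈ (U₁ ⊓ U₂)ᗮ) :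
    ‖proj U₂ a‖ ≤ cosF U₁ U₂ * ‖a‖ := by
  set q := proj U₂ a with hq
  rcases eq_or_ne q 0 with h0 | h0
  · rw [h0, norm_zero]
    exact mul_nonneg (cosF_nonneg U₁ U₂) (norm_nonneg a)
  have ha0 : a ≠ 0 := by
    rintro rfl; exact h0 (by simp [hq, proj])
  have hqC : q ∈ (U₁ ⊓ U₂)ᗮ := by
    intro x hx
    have : ⟪x, q⟫ = ⟪proj U₂ x, a⟫ := by
      rw [real_inner_comm, inner_proj_left, real_inner_comm]
    rw [this, proj_eq_self hx.2]
    exact ha' x hx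
  have key : ⟪(‖a‖⁻¹ • a), (‖q‖⁻¹ • q)⟫ ≤ cosF U₁ U₂ := by
    apply inner_le_cosF
    · rw [norm_smul, norm_inv, norm_norm, inv_mul_cancel₀ (norm_ne_zero_iff.2 ha0)]
    · rw [norm_smul, norm_inv, norm_norm, inv_mul_cancel₀ (norm_ne_zero_iff.2 h0)]
    · exact ⟨Submodule.smul_mem _ _ ha, Submodule.smul_mem _ _ ha'⟩
    · exact ⟨Submodule.smul_mem _ _ proj_mem, Submodule.smul_mem _ _ hqC⟩
  have hiq : ⟪a, q⟫ = ‖q‖ ^ 2 := inner_proj_self U₂ a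
  rw [real_inner_smul_left, real_inner_smul_right, hiq] at key
  have hna : 0 < ‖a‖ := norm_pos_iff.2 ha0
  have hnq : 0 < ‖q‖ := norm_pos_iff.2 h0
  have : ‖a‖⁻¹ * (‖q‖⁻¹ * ‖q‖^2) = ‖q‖ / ‖a‖ := by
    field_simp
  rw [this, div_le_iff₀ hna] at key
  linarith [key]

lemma proj_sup_eq {M D : Submodule ℝ (EuclideanSpace ℝ (Fin p))} (hMD : D ≤ Mᗮ)
    (x : EuclideanSpace ℝ (Fin p)) : proj (M ⊔ D) x = proj M x + proj D x := by
  have hDM : M ≤ Dᗮ := (Submodule.le_orthogonal_orthogonal M).trans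
    (Submodule.orthogonal_le hMD)
  have hz : x - (proj M x + proj D x) ∈ (M ⊔ D)ᗮ := by
    rw [← Submodule.inf_orthogonal]
    constructor
    · have h1 : x - proj M x ∈ Mᗮ := Submodule.sub_starProjection_mem_orthogonal x
      have h2 : proj D x ∈ Mᗮ := hMD proj_mem
      have h3 : x - (proj M x + proj D x) = (x - proj M x) - proj D x := by abel
      rw [h3]; exact Submodule.sub_mem _ h1 h2
    · have h1 : x - proj D x ∈ Dᗮ := Submodule.sub_starProjection_mem_orthogonal x
      have h2 : proj M x ∈ Dᗮ := hDM proj_mem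
      have h3 : x - (proj M x + proj D x) = (x - proj D x) - proj M x := by abel
      rw [h3]; exact Submodule.sub_mem _ h1 h2
  exact Submodule.eq_starProjection_of_mem_orthogonal'
      (Submodule.add_mem _ (Submodule.mem_sup_left proj_mem) (Submodule.mem_sup_right proj_mem))
      hz (by abel)

set_option maxHeartbeats 1000000 in
lemma cosF_orthogonal_le (M N : Submodule ℝ (EuclideanSpace ℝ (Fin p))) :
    cosF Mᗮ Nᗮ ≤ cosF M N := by
  set c' := cosF Mᗮ Nᗮ with hc'def
  set c := cosF M N with hcdef
  have hc0 : 0 ≤ c := cosF_nonneg M N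
  rcases le_or_gt c' 0 with h | hc'
  · exact h.trans hc0
  obtain ⟨a, b, ha1, hb1, ha, hb, heq⟩ := exists_max_cosF Mᗮ Nᗮ
  set D := Mᗮ ⊓ Nᗮ with hDdef
  set M' : Submodule ℝ (EuclideanSpace ℝ (Fin p)) := Mᗮ ⊓ Dᗮ with hM'def
  have haM' : a ∈ M' := ha
  set n := proj Nᗮ a with hndef
  have hn_le : ‖n‖ ≤ c' * ‖a‖ := normproj_le ha.1 ha.2
  have hab_n : ⟪a, b⟫ = ⟪n, b⟫ := by
    rw [hndef, inner_proj_left, proj_eq_self hb.1]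
  have hcn : c' ≤ ‖n‖ := by
    have h1 := real_inner_le_norm n b
    nlinarith [heq, hab_n, norm_nonneg n, norm_nonneg b]
  have hna1 : ‖a‖ = 1 := by nlinarith [hcn.trans hn_le, ha1]
  have hnn : ‖n‖ = c' := le_antisymm (by rw [hna1, mul_one] at hn_le; exact hn_le) hcn
  set lam := c' ^ 2 with hlamdef
  have hlam_pos : 0 < lam := by positivity
  have hc'1 : c' < 1 := cosF_lt_one Mᗮ Nᗮ
  have hlam1 : lam < 1 := by nlinarith
  set Q : EuclideanSpace ℝ (Fin p) → EuclideanSpace ℝ (Fin p) :=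
    fun x => lam • proj M' x - proj M' (proj Nᗮ (proj M' x)) with hQdef
  have e1 : ∀ x z : EuclideanSpace ℝ (Fin p),
      ⟪x, proj M' (proj Nᗮ (proj M' z))⟫ = ⟪proj M' (proj Nᗮ (proj M' x)), z⟫ :=
    fun x z => by
      rw [inner_proj_left M' (proj Nᗮ (proj M' x)) z,
        inner_proj_left Nᗮ (proj M' x) (proj M' z),
        inner_proj_left M' x (proj Nᗮ (proj M' z))]
  have hQpsd : ∀ x, 0 ≤ ⟪x, Q x⟫ := by
    intro x
    have h1 : ⟪x, lam • proj M' x⟫ = lam * ‖proj M' x‖ ^ 2 := by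
      rw [real_inner_smul_right, inner_proj_self]
    have h2 : ⟪x, proj M' (proj Nᗮ (proj M' x))⟫ = ‖proj Nᗮ (proj M' x)‖ ^ 2 := by
      rw [← inner_proj_left M' x, ← inner_proj_self Nᗮ (proj M' x)]
    have hyM : proj M' x ∈ M' := proj_mem
    have hproj : ‖proj Nᗮ (proj M' x)‖ ≤ c' * ‖proj M' x‖ := normproj_le hyM.1 hyM.2
    simp only [hQdef, inner_sub_right, h1, h2]
    nlinarith [norm_nonneg (proj Nᗮ (proj M' x)), norm_nonneg (proj M' x)]
  have hQsym : ∀ x z, ⟪x, Q z⟫ = ⟪Q x, z⟫ := by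
    intro x z
    simp only [hQdef, inner_sub_right, inner_sub_left, real_inner_smul_right,
      real_inner_smul_left]
    rw [e1 x z, inner_proj_left M' x z]
  have hQmap : ∀ (s : ℝ) (x y : EuclideanSpace ℝ (Fin p)), Q (x - s • y) = Q x - s • Q y := by
    intro s x y
    simp only [hQdef, proj_sub, proj_smul]
    module
  have hanorm : ⟪a, n⟫ = ‖n‖ ^ 2 := by
    rw [hndef]; exact inner_proj_self Nᗮ a
  have hQa0 : ⟪a, Q a⟫ = 0 := by
    have h1 : proj M' a = a := proj_eq_self haM'
    have h2 : Q a = lam • a - proj M' n := by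
      simp only [hQdef, h1, hndef]
    rw [h2, inner_sub_right, real_inner_smul_right, ← inner_proj_left M' a n, h1, hanorm,
      real_inner_self_eq_norm_sq, hnn, hna1, hlamdef]
    ring
  have hQa : Q a = 0 := by
    set r := Q a with hrdef
    by_contra hr0
    have hrpos : 0 < ‖r‖ ^ 2 := by
      have h0 : 0 < ‖r‖ := norm_pos_iff.2 hr0
      positivity
    set K := ⟪r, Q r⟫ with hKdef
    have hK : 0 ≤ K := hQpsd r
    set ε : ℝ := ‖r‖ ^ 2 / (K + 1) with hεdef
    have hεpos : 0 < ε := by positivity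
    have hεK : ε * K ≤ ‖r‖ ^ 2 := by
      rw [hεdef, div_mul_eq_mul_div, div_le_iff₀ (by linarith)]
      nlinarith
    have hkey := hQpsd (a - ε • r)
    rw [hQmap] at hkey
    simp only [inner_sub_left, inner_sub_right, real_inner_smul_left,
      real_inner_smul_right] at hkey
    have har : ⟪a, Q r⟫ = ‖r‖ ^ 2 := by
      rw [hQsym a r, ← hrdef, real_inner_self_eq_norm_sq]
    have hra : ⟪r, Q a⟫ = ‖r‖ ^ 2 := by
      rw [← hrdef, real_inner_self_eq_norm_sq]
    rw [hQa0, har, hra, ← hKdef] at hkey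
    have h5 : ε * (ε * K) ≤ ε * ‖r‖ ^ 2 := mul_le_mul_of_nonneg_left hεK hεpos.le
    have h6 : 0 < ε * ‖r‖ ^ 2 := mul_pos hεpos hrpos
    nlinarith [hkey, h5, h6]
  have heig : proj M' n = lam • a := by
    have h1 : proj M' a = a := proj_eq_self haM'
    have h2 : Q a = lam • a - proj M' n := by simp only [hQdef, h1, hndef]
    rw [hQa] at h2
    exact (sub_eq_zero.1 h2.symm).symm
  set m' := n - lam • a with hm'def
  have hm'_in : m' ∈ M'ᗮ := by
    have h1 := Submodule.sub_starProjection_mem_orthogonal (K := M') n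
    have h2 : M'.starProjection n = lam • a := heig
    rw [h2] at h1
    exact h1
  have hinner_an : ⟪a, n⟫ = lam := by
    rw [inner_proj_self Nᗮ a, ← hndef, hnn, hlamdef]
  have hm'_norm : ‖m'‖ ^ 2 = lam * (1 - lam) := by
    have h7 : ⟪n, a⟫ = lam := by rw [real_inner_comm]; exact hinner_an
    rw [hm'def, norm_sub_sq_real, real_inner_smul_right, h7,
      norm_smul, Real.norm_eq_abs, abs_of_pos hlam_pos, mul_pow, hna1]
    have h8 : ‖n‖ ^ 2 = lam := by rw [hnn, hlamdef]
    rw [h8]; ring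
  have hm'0 : m' ≠ 0 := by
    intro h
    rw [h, norm_zero] at hm'_norm
    nlinarith
  have hnNperp : proj Nᗮ n = n := proj_eq_self proj_mem
  have hprojN : ∀ x : EuclideanSpace ℝ (Fin p), proj N x = x - proj Nᗮ x := by
    intro x
    rw [proj_orthogonal N x]; abel
  have hprojN_m' : proj N m' = lam • m' - (lam * (1 - lam)) • a := by
    rw [hprojN, hm'def, proj_sub, proj_smul, hnNperp, ← hndef]
    module
  have hM'perp : M'ᗮ = M ⊔ D := by
    rw [hM'def, hDdef]
    rw [Submodule.inf_orthogonal]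
    exact Submodule.orthogonal_orthogonal _
  have hD_Mp : D ≤ Mᗮ := inf_le_left
  have hD_Np : D ≤ Nᗮ := inf_le_right
  have hM_Dp : M ≤ Dᗮ := (Submodule.le_orthogonal_orthogonal M).trans
    (Submodule.orthogonal_le hD_Mp)
  have hN_Dp : N ≤ Dᗮ := (Submodule.le_orthogonal_orthogonal N).trans
    (Submodule.orthogonal_le hD_Np)
  have hproj_sup : ∀ x, proj M'ᗮ x = proj M x + proj D x := by
    intro x; rw [hM'perp]; exact proj_sup_eq hD_Mp x
  have hkey : proj M'ᗮ (proj N m') = lam • m' := by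
    rw [hprojN_m', proj_sub, proj_smul, proj_smul, proj_eq_self hm'_in,
      proj_eq_zero (Submodule.le_orthogonal_orthogonal M' haM')]
    module
  have hMN : proj M (proj N m') = lam • m' - proj D (proj N m') := by
    rw [← hkey, hproj_sup]; abel
  have hDprojN : proj D (proj N m') = 0 := proj_eq_zero (hN_Dp proj_mem)
  rw [hDprojN, sub_zero] at hMN
  have hDm' : proj D m' = 0 := by
    have h1 : proj D (proj M (proj N m')) = 0 := proj_eq_zero (hM_Dp proj_mem)
    rw [hMN, proj_smul] at h1
    have := smul_eq_zero.1 h1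
    rcases this with h | h
    · exact absurd h (ne_of_gt hlam_pos)
    · exact h
  have hm'M : m' ∈ M := by
    have h1 : m' ∈ M ⊔ D := hM'perp ▸ hm'_in
    have h2 : proj (M ⊔ D) m' = m' := proj_eq_self h1
    rw [proj_sup_eq hD_Mp, hDm', add_zero] at h2
    rw [← h2]; exact proj_mem
  have hm'C : m' ∈ (M ⊓ N)ᗮ := by
    rw [Submodule.mem_orthogonal]
    intro x hx
    have h1 : lam * ⟪x, m'⟫ = ⟪x, m'⟫ := by
      calc lam * ⟪x, m'⟫ = ⟪x, lam • m'⟫ := (real_inner_smul_right x m' lam).symm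
        _ = ⟪x, proj M (proj N m')⟫ := by rw [hMN]
        _ = ⟪proj M x, proj N m'⟫ := (inner_proj_left M x (proj N m')).symm
        _ = ⟪x, proj N m'⟫ := by rw [proj_eq_self hx.1]
        _ = ⟪proj N x, m'⟫ := (inner_proj_left N x m').symm
        _ = ⟪x, m'⟫ := by rw [proj_eq_self hx.2]
    have h2 : (lam - 1) * ⟪x, m'⟫ = 0 := by linarith [h1]
    rcases mul_eq_zero.1 h2 with h | h
    · exact absurd h (by nlinarith)
    · exact h
  have hfin1 : ‖proj N m'‖ ^ 2 = lam * ‖m'‖ ^ 2 := by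
    have h1 : ‖proj N m'‖ ^ 2 = ⟪m', proj N m'⟫ := (inner_proj_self N m').symm
    have h2 : ⟪m', proj N m'⟫ = ⟪proj M m', proj N m'⟫ := by rw [proj_eq_self hm'M]
    have h3 : ⟪proj M m', proj N m'⟫ = ⟪m', proj M (proj N m')⟫ :=
      inner_proj_left M m' (proj N m')
    rw [h1, h2, h3, hMN, real_inner_smul_right, real_inner_self_eq_norm_sq]
  have hfin2 : ‖proj N m'‖ ≤ c * ‖m'‖ := normproj_le hm'M hm'C
  have hm'pos : 0 < ‖m'‖ := norm_pos_iff.2 hm'0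
  have h8 : ‖proj N m'‖ ^ 2 ≤ (c * ‖m'‖) ^ 2 := by
    have := pow_le_pow_left₀ (norm_nonneg (proj N m')) hfin2 2
    exact this
  have hlamc : lam ≤ c ^ 2 := by
    have h9 : lam * ‖m'‖ ^ 2 ≤ c ^ 2 * ‖m'‖ ^ 2 := by nlinarith [h8, hfin1]
    exact le_of_mul_le_mul_right h9 (by positivity)
  rw [hlamdef] at hlamc
  nlinarith [hlamc, hc0, hc', sq_nonneg (c' - c), sq_nonneg (c' + c)]

lemma cosFriedrichs_eq_cosF (U₁ U₂ : Submodule ℝ (EuclideanSpace ℝ (Fin p))) :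
    cosFriedrichs U₁ U₂ = cosF U₁ U₂ := rfl

set_option maxHeartbeats 1000000 in
theorem stmt3 {p : ℕ} (U₁ U₂ : Submodule ℝ (EuclideanSpace ℝ (Fin p)))
    (v : ℕ → EuclideanSpace ℝ (Fin p))
    (hv : ∀ k, v (k + 1) =
      v k + (proj U₂ ((2 : ℝ) • proj U₁ (v k) - v k) - proj U₁ (v k))) :
    Tendsto v atTop (𝓝 (proj (U₁ ⊓ U₂) (v 0) + proj (U₁ᗮ ⊓ U₂ᗮ) (v 0))) ∧
    ∀ k : ℕ,
      ‖v k - (proj (U₁ ⊓ U₂) (v 0) + proj (U₁ᗮ ⊓ U₂ᗮ) (v 0))‖ ≤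
        (cosFriedrichs U₁ U₂) ^ k *
          ‖v 0 - (proj (U₁ ⊓ U₂) (v 0) + proj (U₁ᗮ ⊓ U₂ᗮ) (v 0))‖ := by
  rw [cosFriedrichs_eq_cosF]
  set C := U₁ ⊓ U₂ with hCdef
  set D := U₁ᗮ ⊓ U₂ᗮ with hDdef
  set w : EuclideanSpace ℝ (Fin p) := proj C (v 0) + proj D (v 0) with hwdef
  set c := cosF U₁ U₂ with hcdef
  have hc0 : 0 ≤ c := cosF_nonneg U₁ U₂
  have hc1 : c < 1 := cosF_lt_one U₁ U₂
  have hdual : cosF U₁ᗮ U₂ᗮ ≤ c := cosF_orthogonal_le U₁ U₂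
  -- subspace order facts
  have hD_C : D ≤ Cᗮ := inf_le_left.trans (Submodule.orthogonal_le inf_le_left)
  have hC_D : C ≤ Dᗮ := (Submodule.le_orthogonal_orthogonal C).trans
    (Submodule.orthogonal_le hD_C)
  -- the linear operator
  set T : EuclideanSpace ℝ (Fin p) → EuclideanSpace ℝ (Fin p) :=
    fun x => proj U₂ (proj U₁ x) + proj U₂ᗮ (proj U₁ᗮ x) with hTdef
  have hTstep : ∀ x, x + (proj U₂ ((2 : ℝ) • proj U₁ x - x) - proj U₁ x) = T x := by
    intro x
    simp only [hTdef, proj_orthogonal U₁, proj_orthogonal U₂, proj_sub, proj_smul]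
    module
  have hT : ∀ k, v (k + 1) = T (v k) := fun k => by rw [hv k, hTstep]
  have hTsub : ∀ x y, T (x - y) = T x - T y := by
    intro x y
    simp only [hTdef, proj_sub]
    abel
  have hTadd : ∀ x y, T (x + y) = T x + T y := by
    intro x y
    simp only [hTdef, proj_add]
    abel
  have hTw : T w = w := by
    rw [hwdef, hTadd]
    have hpc := proj_mem (U := C) (v := v 0)
    have hpd := proj_mem (U := D) (v := v 0)
    have h1 : T (proj C (v 0)) = proj C (v 0) := by
      simp only [hTdef]
      rw [proj_eq_self hpc.1, proj_eq_self hpc.2,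
        proj_eq_zero (Submodule.le_orthogonal_orthogonal U₁ hpc.1)]
      simp [proj]
    have h2 : T (proj D (v 0)) = proj D (v 0) := by
      simp only [hTdef]
      rw [proj_eq_zero hpd.1, proj_eq_self hpd.1, proj_eq_self hpd.2]
      simp [proj]
    rw [h1, h2]
  -- contraction and invariance
  have hcontract : ∀ x : EuclideanSpace ℝ (Fin p), x ∈ Cᗮ → x ∈ Dᗮ →
      ‖T x‖ ≤ c * ‖x‖ ∧ T x ∈ Cᗮ ∧ T x ∈ Dᗮ := by
    intro x hxC hxD
    set y := proj U₁ x with hy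
    set z := proj U₁ᗮ x with hz
    have hyC : y ∈ Cᗮ := by
      rw [Submodule.mem_orthogonal]
      intro u hu
      rw [hy, ← inner_proj_left U₁ u x, proj_eq_self hu.1]
      exact hxC u hu
    have hzD : z ∈ Dᗮ := by
      rw [Submodule.mem_orthogonal]
      intro u hu
      rw [hz, ← inner_proj_left U₁ᗮ u x, proj_eq_self hu.1]
      exact hxD u hu
    have hb1 : ‖proj U₂ y‖ ≤ c * ‖y‖ := normproj_le proj_mem hyC
    have hb2 : ‖proj U₂ᗮ z‖ ≤ c * ‖z‖ := by
      have h1 : ‖proj U₂ᗮ z‖ ≤ cosF U₁ᗮ U₂ᗮ * ‖z‖ := normproj_le proj_mem hzD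
      exact h1.trans (mul_le_mul_of_nonneg_right hdual (norm_nonneg z))
    have horth : ⟪proj U₂ y, proj U₂ᗮ z⟫ = 0 :=
      Submodule.inner_right_of_mem_orthogonal proj_mem proj_mem
    have hpyth_out : ‖T x‖ ^ 2 = ‖proj U₂ y‖ ^ 2 + ‖proj U₂ᗮ z‖ ^ 2 := by
      simp only [hTdef]
      rw [norm_add_sq_real, horth]
      ring
    have hxyz : x = y + z := by
      rw [hy, hz, proj_orthogonal U₁ x]; abel
    have hyz : ⟪y, z⟫ = 0 :=
      Submodule.inner_right_of_mem_orthogonal proj_mem proj_mem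
    have hpyth_in : ‖x‖ ^ 2 = ‖y‖ ^ 2 + ‖z‖ ^ 2 := by
      rw [hxyz, norm_add_sq_real, hyz]; ring
    refine ⟨?_, ?_, ?_⟩
    · have hsq : ‖T x‖ ^ 2 ≤ (c * ‖x‖) ^ 2 := by
        rw [hpyth_out, mul_pow, hpyth_in]
        nlinarith [norm_nonneg (proj U₂ y), norm_nonneg (proj U₂ᗮ z),
          norm_nonneg y, norm_nonneg z, hb1, hb2, hc0]
      nlinarith [norm_nonneg (T x), mul_nonneg hc0 (norm_nonneg x), hsq]
    · rw [Submodule.mem_orthogonal]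
      intro u hu
      simp only [hTdef, inner_add_right]
      have e1 : ⟪u, proj U₂ y⟫ = (0:ℝ) := by
        rw [← inner_proj_left U₂ u y, proj_eq_self hu.2]
        exact hyC u hu
      have e2 : ⟪u, proj U₂ᗮ z⟫ = (0:ℝ) := by
        rw [← inner_proj_left U₂ᗮ u z,
          proj_eq_zero (Submodule.le_orthogonal_orthogonal U₂ hu.2)]
        simp
      rw [e1, e2]; ring
    · rw [Submodule.mem_orthogonal]
      intro u hu
      simp only [hTdef, inner_add_right]
      have e1 : ⟪u, proj U₂ y⟫ = (0:ℝ) := by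
        rw [← inner_proj_left U₂ u y, proj_eq_zero hu.2]
        simp
      have e2 : ⟪u, proj U₂ᗮ z⟫ = (0:ℝ) := by
        rw [← inner_proj_left U₂ᗮ u z, proj_eq_self hu.2]
        exact hzD u hu
      rw [e1, e2]; ring
  -- base case memberships
  have hbase1 : v 0 - w ∈ Cᗮ := by
    have h1 : v 0 - proj C (v 0) ∈ Cᗮ := Submodule.sub_starProjection_mem_orthogonal (v 0)
    have h2 : proj D (v 0) ∈ Cᗮ := hD_C proj_mem
    have h3 : v 0 - w = (v 0 - proj C (v 0)) - proj D (v 0) := by rw [hwdef]; abel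
    rw [h3]; exact Submodule.sub_mem _ h1 h2
  have hbase2 : v 0 - w ∈ Dᗮ := by
    have h1 : v 0 - proj D (v 0) ∈ Dᗮ := Submodule.sub_starProjection_mem_orthogonal (v 0)
    have h2 : proj C (v 0) ∈ Dᗮ := hC_D proj_mem
    have h3 : v 0 - w = (v 0 - proj D (v 0)) - proj C (v 0) := by rw [hwdef]; abel
    rw [h3]; exact Submodule.sub_mem _ h1 h2
  have hmain : ∀ k, (v k - w ∈ Cᗮ ∧ v k - w ∈ Dᗮ) ∧ ‖v k - w‖ ≤ c ^ k * ‖v 0 - w‖ := by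
    intro k
    induction k with
    | zero => exact ⟨⟨hbase1, hbase2⟩, by simp⟩
    | succ k ih =>
      obtain ⟨⟨h1, h2⟩, h3⟩ := ih
      have hstep : v (k + 1) - w = T (v k - w) := by
        rw [hT k, hTsub, hTw]
      obtain ⟨hb, hm1, hm2⟩ := hcontract _ h1 h2
      refine ⟨⟨hstep ▸ hm1, hstep ▸ hm2⟩, ?_⟩
      rw [hstep]
      calc ‖T (v k - w)‖ ≤ c * ‖v k - w‖ := hb
        _ ≤ c * (c ^ k * ‖v 0 - w‖) := mul_le_mul_of_nonneg_left h3 hc0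
        _ = c ^ (k + 1) * ‖v 0 - w‖ := by ring
  constructor
  · rw [tendsto_iff_norm_sub_tendsto_zero]
    apply squeeze_zero (fun k => norm_nonneg _) (fun k => (hmain k).2)
    have h0 := tendsto_pow_atTop_nhds_zero_of_lt_one hc0 hc1
    simpa using h0.mul_const ‖v 0 - w‖
  · exact fun k => (hmain k).2
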